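/- Let (g_n)_{n≥1} be a sequence in L¹[0,1] with ‖g_n‖₁ = 1 for all n and pairwise disjoint supports. For t ∈ (1,2), let C_t := { s₁(t−1)g₁ + Σ_{n≥2} s_n g_n : s_n ≥ 0 for all n, Σ_{n≥1} s_n = 1 }. Then the sequence (g_n)_{n≥2} lies in C_t, converges to 0 Lebesgue-almost everywhere, and for every h ∈ C_t, limsup_n ‖g_n − h‖₁ ≥ t; since limsup_n ‖g_n − 0‖₁ = 1, this shows that the coefficient t(C_t) (the infimum of all λ ≥ 0 such that for every sequence (x_n) ⊆ C_t converging a.e. to some x ∈ L¹[0,1], inf_{c∈C_t} limsup_n ‖c − x_n‖₁ ≤ λ·limsup_n ‖x − x_n‖₁) satisfies t(C_t) ≥ t. -/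

import Mathlib

set_option maxHeartbeats 1000000
open MeasureTheory Filter Topology
open scoped ENNReal NNReal

/-- Lebesgue measure on `[0,1]`. -/
noncomputable def μ01 : Measure ℝ := volume.restrict (Set.Icc 0 1)

instance : IsFiniteMeasure μ01 := by
  constructor
  simp [μ01, Real.volume_Icc]

/-- The set `C_t = { s₁(t-1)g₁ + Σ_{n≥2} s_n g_n : s_n ≥ 0, Σ s_n = 1 }` (here the sequence
`g` is indexed from `0`, so `g 0` plays the role of `g₁`). -/
noncomputable def Ct (g : ℕ → Lp ℝ 1 μ01) (t : ℝ) : Set (Lp ℝ 1 μ01) :=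
  {f | ∃ s : ℕ → ℝ, (∀ n, 0 ≤ s n) ∧ (∑' n, s n) = 1 ∧
    f = ((t - 1) * s 0) • g 0 + ∑' n : ℕ, s (n + 1) • g (n + 1)}

/-- The coefficient `t(C)` of a set `C ⊆ L¹[0,1]`, relative to a.e. convergence. -/
noncomputable def tCoef (C : Set (Lp ℝ 1 μ01)) : ℝ :=
  sInf {l : ℝ | 0 ≤ l ∧ ∀ (xs : ℕ → Lp ℝ 1 μ01) (x : Lp ℝ 1 μ01),
    (∀ n, xs n ∈ C) →
    (∀ᵐ t' ∂μ01, Tendsto (fun n => (xs n : ℝ → ℝ) t') atTop (𝓝 ((x : ℝ → ℝ) t'))) →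
    sInf ((fun c => limsup (fun n => ‖c - xs n‖) atTop) '' C) ≤
      l * limsup (fun n => ‖x - xs n‖) atTop}

lemma norm_add_disj (f k : Lp ℝ 1 μ01)
    (h : ∀ᵐ x ∂μ01, (f : ℝ → ℝ) x = 0 ∨ (k : ℝ → ℝ) x = 0) :
    ‖f + k‖ = ‖f‖ + ‖k‖ := by
  have h1 : ∀ᵐ x ∂μ01,
      (‖((f + k : Lp ℝ 1 μ01) : ℝ → ℝ) x‖₊ : ℝ≥0∞)
        = (‖(f : ℝ → ℝ) x‖₊ : ℝ≥0∞) + ‖(k : ℝ → ℝ) x‖₊ := by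
    filter_upwards [Lp.coeFn_add f k, h] with x hx hd
    rcases hd with h0 | h0 <;> rw [hx, Pi.add_apply, h0] <;> simp
  have hf := Lp.aestronglyMeasurable f
  have hint : ∫⁻ x, ‖((f + k : Lp ℝ 1 μ01) : ℝ → ℝ) x‖₊ ∂μ01
      = (∫⁻ x, ‖(f : ℝ → ℝ) x‖₊ ∂μ01) + ∫⁻ x, ‖(k : ℝ → ℝ) x‖₊ ∂μ01 := by
    rw [lintegral_congr_ae h1]; exact lintegral_add_left' hf.enorm _
  have hfin1 : (∫⁻ x, ‖(f : ℝ → ℝ) x‖₊ ∂μ01) ≠ ⊤ := by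
    simp only [← enorm_eq_nnnorm, ← eLpNorm_one_eq_lintegral_enorm]
    exact (Lp.eLpNorm_lt_top f).ne
  have hfin2 : (∫⁻ x, ‖(k : ℝ → ℝ) x‖₊ ∂μ01) ≠ ⊤ := by
    simp only [← enorm_eq_nnnorm, ← eLpNorm_one_eq_lintegral_enorm]
    exact (Lp.eLpNorm_lt_top k).ne
  simp only [Lp.norm_def, eLpNorm_one_eq_lintegral_enorm, enorm_eq_nnnorm, hint,
    ENNReal.toReal_add hfin1 hfin2]

lemma coeFn_finset_sum (s : Finset ℕ) (f : ℕ → Lp ℝ 1 μ01) :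
    ∀ᵐ x ∂μ01, ((∑ j ∈ s, f j : Lp ℝ 1 μ01) : ℝ → ℝ) x = ∑ j ∈ s, (f j : ℝ → ℝ) x := by
  induction s using Finset.induction_on with
  | empty => simp only [Finset.sum_empty]; exact Lp.coeFn_zero ℝ 1 μ01
  | @insert i s hi ih =>
    filter_upwards [Lp.coeFn_add (f i) (∑ j ∈ s, f j), ih] with x hx h2
    rw [Finset.sum_insert hi, hx, Pi.add_apply, h2, Finset.sum_insert hi]

lemma norm_finset_sum (g : ℕ → Lp ℝ 1 μ01)
    (hae : ∀ᵐ x ∂μ01, ∀ m n : ℕ, m ≠ n → ((g m : ℝ → ℝ) x = 0 ∨ (g n : ℝ → ℝ) x = 0))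
    (a : ℕ → ℝ) (s : Finset ℕ) :
    ‖∑ j ∈ s, a j • g j‖ = ∑ j ∈ s, |a j| * ‖g j‖ := by
  induction s using Finset.induction_on with
  | empty => simp
  | @insert i s hi ih =>
    rw [Finset.sum_insert hi, Finset.sum_insert hi, ← ih]
    rw [norm_add_disj]
    · rw [norm_smul, Real.norm_eq_abs]
    · have hsum := coeFn_finset_sum s (fun j => a j • g j)
      have hsm' : ∀ᵐ x ∂μ01, ∀ j : ℕ,
          ((a j • g j : Lp ℝ 1 μ01) : ℝ → ℝ) x = a j • (g j : ℝ → ℝ) x :=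
        ae_all_iff.2 fun j => Lp.coeFn_smul (a j) (g j)
      filter_upwards [hae, hsum, hsm'] with x hx h1 h2
      by_cases hz : (g i : ℝ → ℝ) x = 0
      · left; rw [h2 i, hz, smul_zero]
      · right
        rw [h1]
        apply Finset.sum_eq_zero
        intro j hj
        have hj0 : (g j : ℝ → ℝ) x = 0 := by
          rcases hx i j (by rintro rfl; exact hi hj) with h | h
          · exact absurd h hz
          · exact h
        rw [h2 j, hj0, smul_zero]

/-- The sequence `(g_n)_{n≥2}` lies in `C_t`, converges to `0` a.e., has
`limsup ‖g_n - 0‖ = 1`, and `limsup ‖g_n - h‖ ≥ t` for every `h ∈ C_t`; consequently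
`t(C_t) ≥ t`. -/
theorem tCoef_Ct_ge
    (g : ℕ → Lp ℝ 1 μ01) (hnorm : ∀ n, ‖g n‖ = 1)
    (hdisj : ∀ m n : ℕ, m ≠ n → ∀ᵐ x ∂μ01, (g m : ℝ → ℝ) x = 0 ∨ (g n : ℝ → ℝ) x = 0)
    (t : ℝ) (ht : t ∈ Set.Ioo (1 : ℝ) 2) :
    (∀ n : ℕ, 1 ≤ n → g n ∈ Ct g t) ∧
    (∀ᵐ x ∂μ01, Tendsto (fun n => (g (n + 1) : ℝ → ℝ) x) atTop (𝓝 0)) ∧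
    limsup (fun n => ‖g (n + 1) - 0‖) atTop = 1 ∧
    (∀ h ∈ Ct g t, t ≤ limsup (fun n => ‖g (n + 1) - h‖) atTop) ∧
    t ≤ tCoef (Ct g t) := by
  obtain ⟨ht1, ht2⟩ := ht
  -- a.e. joint disjointness
  have hae : ∀ᵐ x ∂μ01, ∀ m n : ℕ, m ≠ n →
      ((g m : ℝ → ℝ) x = 0 ∨ (g n : ℝ → ℝ) x = 0) := by
    rw [ae_all_iff]
    intro m
    rw [ae_all_iff]
    intro n
    by_cases h : m = n
    · exact Eventually.of_forall fun x hmn => absurd h hmn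
    · exact (hdisj m n h).mono fun x hx _ => hx
  -- Part 1
  have part1 : ∀ n : ℕ, 1 ≤ n → g n ∈ Ct g t := by
    intro n hn
    refine ⟨fun k => if k = n then 1 else 0, fun k => by by_cases hk : k = n <;> simp [hk], ?_, ?_⟩
    · exact tsum_ite_eq n 1
    · have h0 : (if 0 = n then (1:ℝ) else 0) = 0 := by
        rw [if_neg]; omega
      have hts : (∑' k : ℕ, (if k + 1 = n then (1:ℝ) else 0) • g (k + 1)) = g n := by
        rw [tsum_eq_single (n - 1)]
        · rw [if_pos (by omega)]
          rw [one_smul]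
          congr 1
          omega
        · intro b hb
          rw [if_neg (by omega), zero_smul]
      simp only [h0, hts, mul_zero, zero_smul, zero_add]
  -- Part 2
  have part2 : ∀ᵐ x ∂μ01, Tendsto (fun n => (g (n + 1) : ℝ → ℝ) x) atTop (𝓝 0) := by
    filter_upwards [hae] with x hx
    have hev : ∀ᶠ n in atTop, (g (n + 1) : ℝ → ℝ) x = 0 := by
      by_cases hex : ∃ n0 : ℕ, (g (n0 + 1) : ℝ → ℝ) x ≠ 0
      · obtain ⟨n0, hn0⟩ := hex
        filter_upwards [eventually_gt_atTop n0] with n hn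
        rcases hx (n0 + 1) (n + 1) (by omega) with h | h
        · exact absurd h hn0
        · exact h
      · push_neg at hex
        exact Eventually.of_forall hex
    exact Tendsto.congr' (hev.mono fun n h => h.symm) tendsto_const_nhds
  -- Part 3
  have part3 : limsup (fun n => ‖g (n + 1) - 0‖) atTop = 1 := by
    have heq : (fun n => ‖g (n + 1) - 0‖) = fun _ : ℕ => (1 : ℝ) :=
      funext fun n => by rw [sub_zero, hnorm]
    rw [heq, limsup_const]
  -- Part 4
  have part4 : ∀ h ∈ Ct g t, t ≤ limsup (fun n => ‖g (n + 1) - h‖) atTop := by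
    rintro h ⟨s, hs0, hs1, hrep⟩
    have hsumm : Summable s := by
      by_contra hc
      rw [tsum_eq_zero_of_not_summable hc] at hs1
      norm_num at hs1
    have hs0le : s 0 ≤ 1 := hs1 ▸ Summable.le_tsum hsumm 0 fun j _ => hs0 j
    have hsum1 : Summable fun n => s (n + 1) := (summable_nat_add_iff 1).2 hsumm
    have hts1 : (∑' n, s (n + 1)) = 1 - s 0 := by
      have := Summable.tsum_eq_zero_add hsumm
      rw [hs1] at this
      linarith
    have hnormsm : ∀ n, ‖s (n + 1) • g (n + 1)‖ = s (n + 1) := fun n => by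
      rw [norm_smul, hnorm, Real.norm_eq_abs, abs_of_nonneg (hs0 _), mul_one]
    have hG : Summable fun n => s (n + 1) • g (n + 1) :=
      Summable.of_norm (by simpa only [hnormsm] using hsum1)
    set c0 : ℝ := (t - 1) * s 0 with hc0
    have hc0nn : 0 ≤ c0 := mul_nonneg (by linarith) (hs0 0)
    refine le_of_forall_sub_le ?_
    intro ε hε
    -- choose N with partial sum close
    obtain ⟨N, hN⟩ := (Metric.tendsto_atTop.1 hsum1.hasSum.tendsto_sum_nat (ε / 2)
      (by positivity))
    have hNd := hN N le_rfl
    rw [Real.dist_eq] at hNd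
    set P : ℝ := ∑ i ∈ Finset.range N, s (i + 1) with hP
    have htail : (∑' i, s (i + N + 1)) = (1 - s 0) - P := by
      have h' := Summable.sum_add_tsum_nat_add N hsum1
      rw [hts1] at h'
      linarith [h', hP]
    have htail_nonneg : 0 ≤ (∑' i, s (i + N + 1)) :=
      tsum_nonneg fun i => hs0 _
    have htail_lt : (∑' i, s (i + N + 1)) < ε / 2 := by
      rw [htail]
      rw [hts1] at hNd
      rcases abs_lt.1 hNd with ⟨h1', h2'⟩
      linarith
    -- tail of the vector series
    have hRsum : Summable fun i => s (i + N + 1) • g (i + N + 1) := by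
      have := (summable_nat_add_iff (f := fun n => s (n + 1) • g (n + 1)) N).2 hG
      simpa using this
    have hRnorm : ‖(∑' n, s (n + 1) • g (n + 1)) -
        ∑ i ∈ Finset.range N, s (i + 1) • g (i + 1)‖ ≤ ∑' i, s (i + N + 1) := by
      have hsplit := Summable.sum_add_tsum_nat_add N hG
      have heq : (∑' n, s (n + 1) • g (n + 1)) -
          (∑ i ∈ Finset.range N, s (i + 1) • g (i + 1)) =
          ∑' i, s (i + N + 1) • g (i + N + 1) := by
        rw [← hsplit]
        abel
      rw [heq]
      have hnsum : Summable fun i => ‖s (i + N + 1) • g (i + N + 1)‖ := by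
        simp only [hnormsm]
        exact (summable_nat_add_iff (f := fun n => s (n + 1)) N).2 hsum1
      calc ‖∑' i, s (i + N + 1) • g (i + N + 1)‖
          ≤ ∑' i, ‖s (i + N + 1) • g (i + N + 1)‖ := norm_tsum_le_tsum_norm hnsum
        _ = ∑' i, s (i + N + 1) := by simp only [hnormsm]
    -- key lower bound for m ≥ N
    have key : ∀ m : ℕ, N ≤ m → t - ε ≤ ‖g (m + 1) - h‖ := by
      intro m hm
      set a : ℕ → ℝ := fun j => if j = m + 1 then 1 else if j = 0 then -c0 else -s j
        with ha
      have hmem : (m + 1) ∉ Finset.range (N + 1) := by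
        simp only [Finset.mem_range]
        omega
      have ham : a (m + 1) = 1 := if_pos rfl
      have ha0 : a 0 = -c0 := by
        rw [ha]
        simp
      have hai : ∀ i, i < N → a (i + 1) = -s (i + 1) := by
        intro i hi
        rw [ha]
        simp only
        rw [if_neg (by omega), if_neg (by omega)]
      have hAeq : (∑ j ∈ insert (m + 1) (Finset.range (N + 1)), a j • g j)
          = g (m + 1) - c0 • g 0 - ∑ i ∈ Finset.range N, s (i + 1) • g (i + 1) := by
        rw [Finset.sum_insert hmem, Finset.sum_range_succ', ham, one_smul, ha0]
        have : ∀ i ∈ Finset.range N, a (i + 1) • g (i + 1) = -(s (i + 1) • g (i + 1)) := by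
          intro i hi
          rw [hai i (Finset.mem_range.1 hi), neg_smul]
        rw [Finset.sum_congr rfl this, Finset.sum_neg_distrib, neg_smul]
        abel
      have hAnorm : ‖g (m + 1) - c0 • g 0 - ∑ i ∈ Finset.range N, s (i + 1) • g (i + 1)‖
          = 1 + c0 + P := by
        rw [← hAeq, norm_finset_sum g hae a, Finset.sum_insert hmem,
          Finset.sum_range_succ', ham, ha0]
        have : ∀ i ∈ Finset.range N, |a (i + 1)| * ‖g (i + 1)‖ = s (i + 1) := by
          intro i hi
          rw [hai i (Finset.mem_range.1 hi), abs_neg, abs_of_nonneg (hs0 _), hnorm, mul_one]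
        rw [Finset.sum_congr rfl this]
        simp only [abs_one, abs_neg, abs_of_nonneg hc0nn, hnorm, mul_one, one_mul]
        ring
      have hsub : g (m + 1) - h =
          (g (m + 1) - c0 • g 0 - ∑ i ∈ Finset.range N, s (i + 1) • g (i + 1)) -
          ((∑' n, s (n + 1) • g (n + 1)) - ∑ i ∈ Finset.range N, s (i + 1) • g (i + 1)) := by
        rw [hrep]
        abel
      have hlb : 1 + c0 + P - (∑' i, s (i + N + 1)) ≤ ‖g (m + 1) - h‖ := by
        rw [hsub]
        calc 1 + c0 + P - (∑' i, s (i + N + 1))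
            ≤ ‖g (m + 1) - c0 • g 0 - ∑ i ∈ Finset.range N, s (i + 1) • g (i + 1)‖ -
              ‖(∑' n, s (n + 1) • g (n + 1)) -
                ∑ i ∈ Finset.range N, s (i + 1) • g (i + 1)‖ := by
              rw [hAnorm]
              linarith [hRnorm]
          _ ≤ _ := norm_sub_norm_le _ _
      have hPeq : P = (1 - s 0) - (∑' i, s (i + N + 1)) := by linarith [htail]
      have : t - ε ≤ 1 + c0 + P - (∑' i, s (i + N + 1)) := by
        rw [hPeq, hc0]
        nlinarith [htail_lt, htail_nonneg, hs0 0, hs0le]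
      linarith [hlb]
    have hbdd : IsBoundedUnder (· ≤ ·) atTop fun n => ‖g (n + 1) - h‖ :=
      isBoundedUnder_of ⟨1 + ‖h‖, fun n => by
        calc ‖g (n + 1) - h‖ ≤ ‖g (n + 1)‖ + ‖h‖ := norm_sub_le _ _
          _ = 1 + ‖h‖ := by rw [hnorm]⟩
    have hfreq : ∃ᶠ n in atTop, t - ε ≤ ‖g (n + 1) - h‖ :=
      (eventually_atTop.2 ⟨N, key⟩).frequently
    exact le_limsup_of_frequently_le hfreq hbdd
  refine ⟨part1, part2, part3, part4, ?_⟩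
  -- Part 5
  -- norm bound on Ct
  have hCb : ∀ c ∈ Ct g t, ‖c‖ ≤ 1 := by
    rintro c ⟨s, hs0, hs1, hrep⟩
    have hsumm : Summable s := by
      by_contra hc
      rw [tsum_eq_zero_of_not_summable hc] at hs1
      norm_num at hs1
    have hs0le : s 0 ≤ 1 := hs1 ▸ Summable.le_tsum hsumm 0 fun j _ => hs0 j
    have hsum1 : Summable fun n => s (n + 1) := (summable_nat_add_iff 1).2 hsumm
    have hts1 : (∑' n, s (n + 1)) = 1 - s 0 := by
      have := Summable.tsum_eq_zero_add hsumm
      rw [hs1] at this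
      linarith
    have hnormsm : ∀ n, ‖s (n + 1) • g (n + 1)‖ = s (n + 1) := fun n => by
      rw [norm_smul, hnorm, Real.norm_eq_abs, abs_of_nonneg (hs0 _), mul_one]
    have hnsum : Summable fun n => ‖s (n + 1) • g (n + 1)‖ := by
      simpa only [hnormsm] using hsum1
    have hT : ‖(∑' n, s (n + 1) • g (n + 1))‖ ≤ 1 - s 0 := by
      calc ‖(∑' n, s (n + 1) • g (n + 1))‖ ≤ ∑' n, ‖s (n + 1) • g (n + 1)‖ :=
            norm_tsum_le_tsum_norm hnsum
        _ = 1 - s 0 := by rw [tsum_congr hnormsm, hts1]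
    have hc0nn : 0 ≤ (t - 1) * s 0 := mul_nonneg (by linarith) (hs0 0)
    rw [hrep]
    calc ‖((t - 1) * s 0) • g 0 + ∑' n, s (n + 1) • g (n + 1)‖
        ≤ ‖((t - 1) * s 0) • g 0‖ + ‖(∑' n, s (n + 1) • g (n + 1))‖ := norm_add_le _ _
      _ ≤ (t - 1) * s 0 + (1 - s 0) := by
          rw [norm_smul, hnorm, mul_one, Real.norm_eq_abs, abs_of_nonneg hc0nn]
          linarith [hT]
      _ ≤ 1 := by nlinarith [hs0 0, hs0le]
  have hCne : g 1 ∈ Ct g t := part1 1 le_rfl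
  have himg : ∀ (xs : ℕ → Lp ℝ 1 μ01), (∀ n, xs n ∈ Ct g t) →
      ∀ r ∈ (fun c => limsup (fun n => ‖c - xs n‖) atTop) '' Ct g t, (0 : ℝ) ≤ r := by
    rintro xs hxs r ⟨c, hc, rfl⟩
    have hb : IsBoundedUnder (· ≤ ·) atTop fun n => ‖c - xs n‖ :=
      isBoundedUnder_of ⟨‖c‖ + 1, fun n =>
        le_trans (norm_sub_le _ _) (by linarith [hCb (xs n) (hxs n)])⟩
    exact le_limsup_of_frequently_le (Frequently.of_forall fun n => norm_nonneg _) hb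
  have h2mem : ∀ (xs : ℕ → Lp ℝ 1 μ01) (x : Lp ℝ 1 μ01),
      (∀ n, xs n ∈ Ct g t) →
      (∀ᵐ t' ∂μ01, Tendsto (fun n => (xs n : ℝ → ℝ) t') atTop (𝓝 ((x : ℝ → ℝ) t'))) →
      sInf ((fun c => limsup (fun n => ‖c - xs n‖) atTop) '' Ct g t) ≤
        2 * limsup (fun n => ‖x - xs n‖) atTop := by
    intro xs x hxs _hconv
    set L := limsup (fun n => ‖x - xs n‖) atTop with hL
    have hbdd : IsBoundedUnder (· ≤ ·) atTop fun n => ‖x - xs n‖ :=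
      isBoundedUnder_of ⟨‖x‖ + 1, fun n =>
        le_trans (norm_sub_le _ _) (by linarith [hCb (xs n) (hxs n)])⟩
    refine le_of_forall_sub_le ?_
    intro ε hε
    have hlt : ∀ᶠ n in atTop, ‖x - xs n‖ < L + ε / 2 :=
      eventually_lt_of_limsup_lt (by linarith) hbdd
    obtain ⟨N, hN⟩ := hlt.exists
    have hNle : ‖xs N - x‖ < L + ε / 2 := by
      rw [norm_sub_rev]
      exact hN
    have hle : limsup (fun n => ‖xs N - xs n‖) atTop ≤ (L + ε / 2) + (L + ε / 2) := by
      refine limsup_le_of_le (isCoboundedUnder_le_of_le atTop fun n => norm_nonneg _) ?_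
      filter_upwards [hlt] with n hn
      calc ‖xs N - xs n‖ ≤ ‖xs N - x‖ + ‖x - xs n‖ := norm_sub_le_norm_sub_add_norm_sub _ _ _
        _ ≤ (L + ε / 2) + (L + ε / 2) := by linarith
    have hsInf_le : sInf ((fun c => limsup (fun n => ‖c - xs n‖) atTop) '' Ct g t) ≤
        limsup (fun n => ‖xs N - xs n‖) atTop :=
      csInf_le ⟨0, fun r hr => himg xs hxs r hr⟩ ⟨xs N, hxs N, rfl⟩
    linarith
  refine le_csInf ⟨2, by norm_num, h2mem⟩ ?_
  rintro l ⟨hl0, hl⟩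
  have hconv0 : ∀ᵐ x' ∂μ01, Tendsto (fun n => (g (n + 1) : ℝ → ℝ) x') atTop
      (𝓝 (((0 : Lp ℝ 1 μ01) : ℝ → ℝ) x')) := by
    filter_upwards [part2, Lp.coeFn_zero ℝ 1 μ01] with x hx h0
    rw [h0]
    exact hx
  have hmain := hl (fun n => g (n + 1)) 0 (fun n => part1 (n + 1) (by omega)) hconv0
  have hls : limsup (fun n => ‖(0 : Lp ℝ 1 μ01) - g (n + 1)‖) atTop = 1 := by
    have heq : (fun n => ‖(0 : Lp ℝ 1 μ01) - g (n + 1)‖) = fun _ : ℕ => (1 : ℝ) :=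
      funext fun n => by rw [zero_sub, norm_neg, hnorm]
    rw [heq, limsup_const]
  rw [hls, mul_one] at hmain
  refine le_trans (le_csInf ⟨_, Set.mem_image_of_mem _ hCne⟩ ?_) hmain
  rintro r ⟨c, hc, rfl⟩
  have heq : (fun n => ‖c - g (n + 1)‖) = fun n => ‖g (n + 1) - c‖ :=
    funext fun n => norm_sub_rev _ _
  simp only []
  rw [heq]
  exact part4 c hc
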